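/- arXiv:1108.0142 — 2 statements merged into one kernel-verified Lean document; each statement's English description precedes it below -/
import Mathlib

section
/- For f, g ∈ ℓᵖ(I) with 1 ≤ p < ∞, the following are equivalent: (1) f ≺ g and g ≺ f; (2) there is a permutation operator P on ℓᵖ(I) (i.e., P e_j = e_{θ(j)} for some bijection θ : I → I) with f = Pg. -/
open scoped ENNReal

/-- The standard basis element `e i` of `ℓᵖ(I)`. -/
noncomputable def stdb (p : ℝ≥0∞) {I : Type*} (i : I) : lp (fun _ : I => ℝ) p :=
  letI := Classical.decEq I
  lp.single p i 1

/-- A bounded linear operator `A : ℓᵖ(J) → ℓᵖ(I)` is positive if `A f ≥ 0` whenever `f ≥ 0`. -/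
def IsPositiveOp {I J : Type*} {p : ℝ≥0∞} [Fact (1 ≤ p)]
    (A : lp (fun _ : J => ℝ) p →L[ℝ] lp (fun _ : I => ℝ) p) : Prop :=
  ∀ f : lp (fun _ : J => ℝ) p, (∀ j, 0 ≤ f j) → ∀ i, 0 ≤ A f i

/-- Row stochastic: positive and each row sum `∑_j ⟨A e_j, e_i⟩` equals 1. -/
def IsRowStochastic {I J : Type*} {p : ℝ≥0∞} [Fact (1 ≤ p)]
    (A : lp (fun _ : J => ℝ) p →L[ℝ] lp (fun _ : I => ℝ) p) : Prop :=
  IsPositiveOp A ∧ ∀ i : I, HasSum (fun j : J => A (stdb p j) i) 1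

/-- Column stochastic: positive and each column sum `∑_i ⟨A e_j, e_i⟩` equals 1. -/
def IsColumnStochastic {I J : Type*} {p : ℝ≥0∞} [Fact (1 ≤ p)]
    (A : lp (fun _ : J => ℝ) p →L[ℝ] lp (fun _ : I => ℝ) p) : Prop :=
  IsPositiveOp A ∧ ∀ j : J, HasSum (fun i : I => A (stdb p j) i) 1

/-- Doubly stochastic: both row and column stochastic. -/
def IsDoublyStochastic {I J : Type*} {p : ℝ≥0∞} [Fact (1 ≤ p)]
    (A : lp (fun _ : J => ℝ) p →L[ℝ] lp (fun _ : I => ℝ) p) : Prop :=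
  IsRowStochastic A ∧ IsColumnStochastic A

/-- `f ≺ g` : `f` is majorized by `g`, i.e. `f = D g` for some doubly stochastic `D`. -/
def Majorized {I : Type*} {p : ℝ≥0∞} [Fact (1 ≤ p)]
    (f g : lp (fun _ : I => ℝ) p) : Prop :=
  ∃ D : lp (fun _ : I => ℝ) p →L[ℝ] lp (fun _ : I => ℝ) p,
    IsDoublyStochastic D ∧ f = D g

/-- `T` preserves majorization if `f ≺ g` implies `T f ≺ T g`. -/
def PreservesMajorization {I : Type*} {p : ℝ≥0∞} [Fact (1 ≤ p)]
    (T : lp (fun _ : I => ℝ) p →L[ℝ] lp (fun _ : I => ℝ) p) : Prop :=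
  ∀ f g : lp (fun _ : I => ℝ) p, Majorized f g → Majorized (T f) (T g)

set_option linter.unusedSectionVars false
set_option linter.unnecessarySimpa false
open Set

/-- Strict tangent line inequality for even powers. -/
lemma pow_tangent_lt {n : ℕ} (hn : Even n) (h0 : n ≠ 0) {μ y : ℝ} (hy : y ≠ μ) :
    μ^n + (n:ℝ)*μ^(n-1)*(y - μ) < y^n := by
  have hsc : StrictConvexOn ℝ univ (fun x : ℝ => x ^ n) := hn.strictConvexOn_pow h0
  have hder : HasDerivAt (fun x : ℝ => x ^ n) ((n:ℝ) * μ^(n-1)) μ := hasDerivAt_pow n μ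
  rcases lt_or_gt_of_ne hy with h | h
  · -- y < μ
    have := hsc.slope_lt_of_hasDerivAt (mem_univ y) (mem_univ μ) h hder
    rw [slope_def_field] at this
    have h2 : (0:ℝ) < μ - y := by linarith
    rw [div_lt_iff₀ h2] at this
    nlinarith
  · have := hsc.lt_slope_of_hasDerivAt (mem_univ μ) (mem_univ y) h hder
    rw [slope_def_field] at this
    have h2 : (0:ℝ) < y - μ := by linarith
    rw [lt_div_iff₀ h2] at this
    nlinarith

lemma pow_tangent_le {n : ℕ} (hn : Even n) (h0 : n ≠ 0) (μ y : ℝ) :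
    μ^n + (n:ℝ)*μ^(n-1)*(y - μ) ≤ y^n := by
  rcases eq_or_ne y μ with h | h
  · subst h; simp
  · exact (pow_tangent_lt hn h0 h).le

section Helpers
variable {I : Type*} {p : ℝ≥0∞} [Fact (1 ≤ p)]

lemma stdb_apply_self (i : I) : stdb p i i = 1 := by
  letI := Classical.decEq I
  exact lp.single_apply_self (E := fun _ : I => ℝ) p i (1:ℝ)

lemma stdb_apply_ne (i : I) {j : I} (h : j ≠ i) : stdb p i j = 0 := by
  letI := Classical.decEq I
  exact lp.single_apply_ne (E := fun _ : I => ℝ) p i (1:ℝ) h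

lemma stdb_nonneg (i j : I) : 0 ≤ stdb p i j := by
  rcases eq_or_ne j i with h | h
  · subst h; rw [stdb_apply_self]; norm_num
  · rw [stdb_apply_ne _ h]

/-- Evaluation at a coordinate as a continuous linear map. -/
noncomputable def evalCLM (p : ℝ≥0∞) [Fact (1 ≤ p)] {I : Type*} (i : I) :
    lp (fun _ : I => ℝ) p →L[ℝ] ℝ :=
  LinearMap.mkContinuous
    { toFun := fun F => F i
      map_add' := fun F G => congrFun (lp.coeFn_add F G) i
      map_smul' := fun c F => congrFun (lp.coeFn_smul c F) i }
    1 (fun F => by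
      simpa using lp.norm_apply_le_norm ((zero_lt_one.trans_le Fact.out).ne' : p ≠ 0) F i)

@[simp] lemma evalCLM_apply (i : I) (F : lp (fun _ : I => ℝ) p) :
    evalCLM p i F = F i := rfl

/-- Matrix expansion of a continuous linear operator. -/
lemma hasSum_matrix (hp : p ≠ ∞)
    (A : lp (fun _ : I => ℝ) p →L[ℝ] lp (fun _ : I => ℝ) p)
    (F : lp (fun _ : I => ℝ) p) (i : I) :
    HasSum (fun j => F j * (A (stdb p j) i)) (A F i) := by
  letI := Classical.decEq I
  have h1 : HasSum (fun j : I => lp.single p j (F j)) F := lp.hasSum_single hp F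
  have h2 := h1.mapL ((evalCLM p i).comp A)
  have h3 : ∀ j : I, ((evalCLM p i).comp A) (lp.single p j (F j))
      = F j * (A (stdb p j) i) := by
    intro j
    have : lp.single p j (F j) = F j • stdb p j := by
      show _ = F j • (lp.single p j (1:ℝ) : lp (fun _ : I => ℝ) p)
      rw [← lp.single_smul]
      norm_num
    rw [this]
    simp [smul_eq_mul]
  simpa [h3] using h2
end Helpers

section Jensen
variable {ι : Type*}

/-- The tangent-line minorant has sum `μ ^ n`. -/
lemma tangent_hasSum {w x : ι → ℝ} {μ : ℝ} (hw1 : HasSum w 1)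
    (hμ : HasSum (fun j => x j * w j) μ) (n : ℕ) :
    HasSum (fun j => w j * (μ^n + (n:ℝ)*μ^(n-1)*(x j - μ))) (μ ^ n) := by
  have h1 : HasSum (fun j => μ^n * w j) (μ^n * 1) := hw1.mul_left _
  have h2 : HasSum (fun j => ((n:ℝ)*μ^(n-1)) * (x j * w j)) (((n:ℝ)*μ^(n-1)) * μ) :=
    hμ.mul_left _
  have h3 : HasSum (fun j => (((n:ℝ)*μ^(n-1)) * μ) * w j) ((((n:ℝ)*μ^(n-1)) * μ) * 1) :=
    hw1.mul_left _
  have h4 := (h1.add h2).sub h3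
  have : (fun j => μ^n * w j + ((n:ℝ)*μ^(n-1)) * (x j * w j) - (((n:ℝ)*μ^(n-1)) * μ) * w j)
      = fun j => w j * (μ^n + (n:ℝ)*μ^(n-1)*(x j - μ)) := by
    funext j; ring
  rw [this] at h4
  have e : μ ^ n * 1 + (n:ℝ)*μ^(n-1)*μ - (n:ℝ)*μ^(n-1)*μ*1 = μ ^ n := by ring
  rwa [e] at h4

lemma jensen_le {w x : ι → ℝ} {μ : ℝ} (hw0 : ∀ j, 0 ≤ w j) (hw1 : HasSum w 1)
    (hμ : HasSum (fun j => x j * w j) μ) {n : ℕ} (hn : Even n) (h0 : n ≠ 0)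
    (hsum : Summable (fun j => w j * x j ^ n)) :
    μ ^ n ≤ ∑' j, w j * x j ^ n := by
  have ht := tangent_hasSum hw1 hμ n
  have hle : ∀ j, w j * (μ^n + (n:ℝ)*μ^(n-1)*(x j - μ)) ≤ w j * x j ^ n := fun j =>
    mul_le_mul_of_nonneg_left (pow_tangent_le hn h0 μ (x j)) (hw0 j)
  calc μ ^ n = ∑' j, w j * (μ^n + (n:ℝ)*μ^(n-1)*(x j - μ)) := ht.tsum_eq.symm
    _ ≤ ∑' j, w j * x j ^ n := ht.summable.tsum_le_tsum hle hsum

lemma jensen_eq {w x : ι → ℝ} {μ : ℝ} (hw0 : ∀ j, 0 ≤ w j) (hw1 : HasSum w 1)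
    (hμ : HasSum (fun j => x j * w j) μ) {n : ℕ} (hn : Even n) (h0 : n ≠ 0)
    (hsum : Summable (fun j => w j * x j ^ n))
    (heq : ∑' j, w j * x j ^ n = μ ^ n) :
    ∀ j, w j ≠ 0 → x j = μ := by
  intro j hj
  by_contra hxj
  have ht := tangent_hasSum hw1 hμ n
  set φ : ι → ℝ := fun j => w j * x j ^ n - w j * (μ^n + (n:ℝ)*μ^(n-1)*(x j - μ)) with hφ
  have hφ0 : ∀ k, 0 ≤ φ k := fun k =>
    sub_nonneg.2 (mul_le_mul_of_nonneg_left (pow_tangent_le hn h0 μ (x k)) (hw0 k))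
  have hφs : Summable φ := hsum.sub ht.summable
  have hφt : ∑' k, φ k = 0 := by
    rw [hsum.tsum_sub ht.summable, heq, ht.tsum_eq, sub_self]
  have hle : φ j ≤ 0 := hφt ▸ hφs.le_tsum j (fun k _ => hφ0 k)
  have hwj : 0 < w j := lt_of_le_of_ne (hw0 j) (Ne.symm hj)
  have hstrict : w j * (μ^n + (n:ℝ)*μ^(n-1)*(x j - μ)) < w j * x j ^ n :=
    mul_lt_mul_of_pos_left (pow_tangent_lt hn h0 hxj) hwj
  have : 0 < φ j := sub_pos.2 hstrict
  linarith
end Jensen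

section SummablePow
variable {I : Type*} {p : ℝ≥0∞} [Fact (1 ≤ p)]

lemma summable_abs_pow (hp : p ≠ ∞) (F : lp (fun _ : I => ℝ) p) {n : ℕ}
    (hn : p.toReal ≤ (n : ℝ)) : Summable (fun i => |F i| ^ n) := by
  have hp1 : (1:ℝ≥0∞) ≤ p := Fact.out
  have hpt : 0 < p.toReal := ENNReal.toReal_pos (zero_lt_one.trans_le hp1).ne' hp
  have hs : Summable (fun i => ‖F i‖ ^ p.toReal) := (lp.hasSum_norm hpt F).summable
  set M : ℝ := max 1 ‖F‖ with hM
  have hM1 : (1:ℝ) ≤ M := le_max_left _ _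
  have hM0 : (0:ℝ) ≤ M := zero_le_one.trans hM1
  have key : ∀ i, |F i| ^ n ≤ M ^ ((n:ℝ) - p.toReal) * ‖F i‖ ^ p.toReal := by
    intro i
    have habs : |F i| = ‖F i‖ := (Real.norm_eq_abs (F i)).symm
    rw [habs]
    have hFi : ‖F i‖ ≤ M := le_trans
      (lp.norm_apply_le_norm (zero_lt_one.trans_le hp1).ne' F i) (le_max_right _ _)
    have h0i : (0:ℝ) ≤ ‖F i‖ := norm_nonneg _
    rcases eq_or_lt_of_le h0i with h | h
    · have hn0 : n ≠ 0 := by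
        rintro rfl
        simp only [Nat.cast_zero] at hn
        linarith
      rw [← h]
      rw [zero_pow hn0, Real.zero_rpow hpt.ne']
      simp
    · have : ‖F i‖ ^ (n:ℝ) = ‖F i‖ ^ ((n:ℝ) - p.toReal) * ‖F i‖ ^ p.toReal := by
        rw [← Real.rpow_add h]; ring_nf
      rw [← Real.rpow_natCast (‖F i‖) n, this]
      exact mul_le_mul_of_nonneg_right
        (Real.rpow_le_rpow h0i hFi (by linarith)) (Real.rpow_nonneg h0i _)
  exact Summable.of_nonneg_of_le (fun i => pow_nonneg (abs_nonneg _) n) key (hs.mul_left _)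

end SummablePow

section Tonelli
variable {α β : Type*}

/-- Column-stochastic Tonelli computation in `ℝ≥0∞`. -/
lemma tonelli_col {d : α → β → ℝ} (h0 : ∀ i j, 0 ≤ d i j)
    (hcol : ∀ j, HasSum (fun i => d i j) 1) (y : β → ℝ) :
    ∑' i, ∑' j, ENNReal.ofReal (d i j * y j) = ∑' j, ENNReal.ofReal (y j) := by
  rw [ENNReal.tsum_comm]
  congr 1
  funext j
  have : ∀ i, ENNReal.ofReal (d i j * y j)
      = ENNReal.ofReal (d i j) * ENNReal.ofReal (y j) := fun i =>
    ENNReal.ofReal_mul (h0 i j)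
  simp_rw [this]
  rw [ENNReal.tsum_mul_right]
  have hsum : ∑' i, ENNReal.ofReal (d i j) = 1 := by
    rw [← ENNReal.ofReal_tsum_of_nonneg (fun i => h0 i j) (hcol j).summable,
      (hcol j).tsum_eq, ENNReal.ofReal_one]
  rw [hsum, one_mul]
end Tonelli

section CardHelpers
variable {α : Type*}

/-- One-sided cardinality comparison, finite case. -/
lemma finite_card_le {a : α → ℝ} {b : α → ℝ} {w : α → α → ℝ}
    (h0 : ∀ i j, 0 ≤ w i j) (hrow : ∀ i, HasSum (w i) 1)
    (hcol : ∀ j, HasSum (fun i => w i j) 1)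
    (hrig : ∀ i j, w i j ≠ 0 → b j = a i) (t : ℝ)
    (hB : {j | b j = t}.Finite) :
    {i | a i = t}.Finite ∧ Nat.card {i // a i = t} ≤ Nat.card {j // b j = t} := by
  classical
  have key : ∀ s : Finset α, (∀ i ∈ s, a i = t) → s.card ≤ hB.toFinset.card := by
    intro s hs
    have rowsum : ∀ i ∈ s, ∑ j ∈ hB.toFinset, w i j = 1 := by
      intro i hi
      refine ((hrow i).unique (hasSum_sum_of_ne_finset_zero (by
          intro j hj
          by_contra hw
          exact hj (hB.mem_toFinset.2 (by rw [mem_setOf_eq, hrig i j hw, hs i hi]))))).symm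
    have hreal : (s.card : ℝ) ≤ (hB.toFinset.card : ℝ) := by
      calc (s.card : ℝ) = ∑ i ∈ s, (1:ℝ) := by simp
        _ = ∑ i ∈ s, ∑ j ∈ hB.toFinset, w i j :=
            Finset.sum_congr rfl (fun i hi => (rowsum i hi).symm)
        _ = ∑ j ∈ hB.toFinset, ∑ i ∈ s, w i j := Finset.sum_comm
        _ ≤ ∑ j ∈ hB.toFinset, (1:ℝ) := by
            refine Finset.sum_le_sum (fun j _ => ?_)
            have := (hcol j).summable.sum_le_tsum s (fun i _ => h0 i j)
            rwa [(hcol j).tsum_eq] at this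
        _ = (hB.toFinset.card : ℝ) := by simp
    exact_mod_cast hreal
  have hA : {i | a i = t}.Finite := by
    by_contra hinf
    obtain ⟨s, hsub, hcard⟩ :=
      Set.Infinite.exists_subset_card_eq hinf (hB.toFinset.card + 1)
    have := key s (fun i hi => hsub hi)
    omega
  refine ⟨hA, ?_⟩
  have h1 : Nat.card {i // a i = t} = hA.toFinset.card :=
    Nat.card_eq_card_finite_toFinset hA
  have h2 : Nat.card {j // b j = t} = hB.toFinset.card :=
    Nat.card_eq_card_finite_toFinset hB
  rw [h1, h2]
  exact key hA.toFinset (fun i hi => (hA.mem_toFinset.1 hi))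

/-- One-sided cardinality comparison, infinite target. -/
lemma mk_fiber_le {a : α → ℝ} {b : α → ℝ} {w : α → α → ℝ}
    (hrow : ∀ i, HasSum (w i) 1)
    (hcol : ∀ j, HasSum (fun i => w i j) 1)
    (hrig : ∀ i j, w i j ≠ 0 → b j = a i) (t : ℝ)
    (hB : {j | b j = t}.Infinite) :
    Cardinal.mk {i // a i = t} ≤ Cardinal.mk {j // b j = t} := by
  classical
  haveI : Infinite {j // b j = t} := hB.to_subtype
  have hex : ∀ i : {i // a i = t}, ∃ j : {j // b j = t}, w i.1 j.1 ≠ 0 := by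
    rintro ⟨i, hi⟩
    by_contra hno
    push_neg at hno
    have hzero : ∀ j, w i j = 0 := by
      intro j
      by_cases hj : b j = t
      · exact hno ⟨j, hj⟩
      · by_contra hw
        exact hj (by rw [hrig i j hw]; exact hi)
    have h0 : HasSum (w i) 0 := by
      have : w i = fun _ => (0:ℝ) := funext hzero
      rw [this]; exact hasSum_zero
    exact one_ne_zero (h0.unique (hrow i)).symm
  choose ρ hρ using hex
  have hcount : ∀ j : {j // b j = t}, Countable {i : {i // a i = t} // ρ i = j} := by
    intro j
    have hsupp : (Function.support (fun i => w i j.1)).Countable :=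
      (hcol j.1).summable.countable_support
    haveI : Countable (Function.support (fun i => w i j.1)) := hsupp.to_subtype
    refine Function.Injective.countable
      (f := fun x : {i : {i // a i = t} // ρ i = j} =>
        (⟨x.1.1, by
          have h := hρ x.1
          rw [x.2] at h
          exact h⟩ : Function.support (fun i => w i j.1))) ?_
    rintro x y h
    simp only [Subtype.mk.injEq] at h
    have h' : x.1.1 = y.1.1 := by have h2 := congrArg Subtype.val h; exact h2
    exact Subtype.ext (Subtype.ext h')
  calc Cardinal.mk {i // a i = t}
      = Cardinal.sum (fun j : {j // b j = t} =>
          Cardinal.mk {i : {i // a i = t} // ρ i = j}) := by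
        rw [← Cardinal.mk_sigma]
        exact Cardinal.mk_congr (Equiv.sigmaFiberEquiv ρ).symm
    _ ≤ Cardinal.sum (fun _ : {j // b j = t} => Cardinal.aleph0) :=
        Cardinal.sum_le_sum _ _ (fun j => haveI := hcount j; Cardinal.mk_le_aleph0)
    _ = Cardinal.mk {j // b j = t} * Cardinal.aleph0 := Cardinal.sum_const' _ Cardinal.aleph0
    _ = Cardinal.mk {j // b j = t} := Cardinal.mul_aleph0_eq (Cardinal.aleph0_le_mk _)

/-- Two-sided: fibers are equinumerous. -/
lemma fiber_equiv_nonempty {a : α → ℝ} {b : α → ℝ} {w : α → α → ℝ} {v : α → α → ℝ}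
    (hw0 : ∀ i j, 0 ≤ w i j) (hv0 : ∀ j i, 0 ≤ v j i)
    (hwrow : ∀ i, HasSum (w i) 1) (hwcol : ∀ j, HasSum (fun i => w i j) 1)
    (hvrow : ∀ j, HasSum (v j) 1) (hvcol : ∀ i, HasSum (fun j => v j i) 1)
    (hwrig : ∀ i j, w i j ≠ 0 → b j = a i) (hvrig : ∀ j i, v j i ≠ 0 → a i = b j)
    (t : ℝ) : Nonempty ({i // a i = t} ≃ {j // b j = t}) := by
  by_cases hB : {j | b j = t}.Finite
  · obtain ⟨hA, hle⟩ := finite_card_le hw0 hwrow hwcol hwrig t hB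
    obtain ⟨hB', hge⟩ := finite_card_le hv0 hvrow hvcol hvrig t hA
    haveI : Finite {i // a i = t} := hA.to_subtype
    haveI : Finite {j // b j = t} := hB.to_subtype
    exact Finite.card_eq.1 (le_antisymm hle hge)
  · have hBinf : {j | b j = t}.Infinite := hB
    have hAinf : {i | a i = t}.Infinite := by
      by_contra hA
      rw [Set.not_infinite] at hA
      obtain ⟨hB', _⟩ := finite_card_le hv0 hvrow hvcol hvrig t hA
      exact hB hB'
    exact Cardinal.eq.1 (le_antisymm
      (mk_fiber_le hwrow hwcol hwrig t hBinf)
      (mk_fiber_le hvrow hvcol hvrig t hAinf))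
end CardHelpers


section Main
variable {I : Type*} {p : ℝ≥0∞} [Fact (1 ≤ p)]

/-- Membership of a permuted element. -/
lemma memℓp_comp_equiv (hp : p ≠ ∞) (τ : I ≃ I) (F : lp (fun _ : I => ℝ) p) :
    Memℓp (fun i => F (τ i)) p := by
  have hp1 : (1:ℝ≥0∞) ≤ p := Fact.out
  have hpt : 0 < p.toReal := ENNReal.toReal_pos (zero_lt_one.trans_le hp1).ne' hp
  apply memℓp_gen
  have h := (lp.hasSum_norm hpt F)
  exact ((τ.hasSum_iff (f := fun i => ‖F i‖ ^ p.toReal)).2 h).summable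

/-- The permutation operator `F ↦ F ∘ τ` on `ℓᵖ`. -/
noncomputable def permCLM (hp : p ≠ ∞) (τ : I ≃ I) :
    lp (fun _ : I => ℝ) p →L[ℝ] lp (fun _ : I => ℝ) p :=
  LinearMap.mkContinuous
    { toFun := fun F => ⟨fun i => F (τ i), memℓp_comp_equiv hp τ F⟩
      map_add' := fun F G => rfl
      map_smul' := fun c F => rfl }
    1 (fun F => by
      have hp1 : (1:ℝ≥0∞) ≤ p := Fact.out
      have hpt : 0 < p.toReal := ENNReal.toReal_pos (zero_lt_one.trans_le hp1).ne' hp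
      rw [one_mul]
      set G : lp (fun _ : I => ℝ) p := ⟨fun i => F (τ i), memℓp_comp_equiv hp τ F⟩ with hG
      have h1 : HasSum (fun i => ‖G i‖ ^ p.toReal) (‖G‖ ^ p.toReal) := lp.hasSum_norm hpt G
      have h2 : HasSum (fun i => ‖G i‖ ^ p.toReal) (‖F‖ ^ p.toReal) :=
        (τ.hasSum_iff (f := fun i => ‖F i‖ ^ p.toReal)).2 (lp.hasSum_norm hpt F)
      have h3 : ‖G‖ ^ p.toReal = ‖F‖ ^ p.toReal := h1.unique h2
      have h4 : ‖G‖ = ‖F‖ := Real.rpow_left_injOn hpt.ne'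
        (by simpa using norm_nonneg G) (by simpa using norm_nonneg F) h3
      exact le_of_eq h4)

@[simp] lemma permCLM_apply (hp : p ≠ ∞) (τ : I ≃ I) (F : lp (fun _ : I => ℝ) p) (i : I) :
    permCLM hp τ F i = F (τ i) := rfl

lemma permCLM_stdb (hp : p ≠ ∞) (τ : I ≃ I) (j : I) :
    permCLM hp τ (stdb p j) = stdb p (τ.symm j) := by
  apply lp.ext
  funext i
  rw [permCLM_apply]
  rcases eq_or_ne i (τ.symm j) with h | h
  · subst h
    rw [stdb_apply_self, Equiv.apply_symm_apply, stdb_apply_self]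
  · rw [stdb_apply_ne _ h, stdb_apply_ne]
    intro hc
    exact h (by rw [← hc]; simp)

/-- The key rigidity lemma. -/
lemma rigidity (hp : p ≠ ∞)
    {D E : lp (fun _ : I => ℝ) p →L[ℝ] lp (fun _ : I => ℝ) p}
    (hD : IsDoublyStochastic D) (hE : IsDoublyStochastic E)
    {f g : lp (fun _ : I => ℝ) p} (hfg : f = D g) (hgf : g = E f) :
    ∀ i j, D (stdb p j) i ≠ 0 → g j = f i := by
  have hp1 : (1:ℝ≥0∞) ≤ p := Fact.out
  set dm : I → I → ℝ := fun i j => D (stdb p j) i with hdm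
  set em : I → I → ℝ := fun j i => E (stdb p i) j with hem
  have hd0 : ∀ i j, 0 ≤ dm i j := fun i j => hD.1.1 (stdb p j) (fun j' => stdb_nonneg j j') i
  have he0 : ∀ j i, 0 ≤ em j i := fun j i => hE.1.1 (stdb p i) (fun j' => stdb_nonneg i j') j
  have hdrow : ∀ i, HasSum (dm i) 1 := hD.1.2
  have hdcol : ∀ j, HasSum (fun i => dm i j) 1 := hD.2.2
  have herow : ∀ j, HasSum (em j) 1 := hE.1.2
  have hecol : ∀ i, HasSum (fun j => em j i) 1 := hE.2.2
  have hgd : ∀ i, HasSum (fun j => g j * dm i j) (f i) := by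
    intro i
    have h := hasSum_matrix hp D g i
    rwa [← hfg] at h
  have hfe : ∀ j, HasSum (fun i => f i * em j i) (g j) := by
    intro j
    have h := hasSum_matrix hp E f j
    rwa [← hgf] at h
  -- the even exponent
  set n : ℕ := 2 * max 1 ⌈p.toReal⌉₊ with hn
  have hneven : Even n := even_two_mul _
  have hn0 : n ≠ 0 := by positivity
  have hnp : p.toReal ≤ (n : ℝ) := by
    calc p.toReal ≤ (⌈p.toReal⌉₊ : ℝ) := Nat.le_ceil _
      _ ≤ (n : ℝ) := by
          have : ⌈p.toReal⌉₊ ≤ n := le_trans (le_max_right 1 _) (by omega)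
          exact_mod_cast this
  have hgpow : Summable (fun j => (g j : ℝ) ^ n) := by
    have := summable_abs_pow hp g hnp
    simpa only [hneven.pow_abs] using this
  have hfpow : Summable (fun i => (f i : ℝ) ^ n) := by
    have := summable_abs_pow hp f hnp
    simpa only [hneven.pow_abs] using this
  have hgp0 : ∀ j, 0 ≤ (g j : ℝ) ^ n := fun j => hneven.pow_nonneg _
  have hfp0 : ∀ i, 0 ≤ (f i : ℝ) ^ n := fun i => hneven.pow_nonneg _
  -- row sums of the pushed powers
  have hSrow : ∀ i, Summable (fun j => dm i j * (g j : ℝ) ^ n) := by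
    intro i
    refine Summable.of_nonneg_of_le (fun j => mul_nonneg (hd0 i j) (hgp0 j)) (fun j => ?_) hgpow
    exact mul_le_of_le_one_left (hgp0 j) (le_hasSum (hdrow i) j (fun k _ => hd0 i k))
  have hTrow : ∀ j, Summable (fun i => em j i * (f i : ℝ) ^ n) := by
    intro j
    refine Summable.of_nonneg_of_le (fun i => mul_nonneg (he0 j i) (hfp0 i)) (fun i => ?_) hfpow
    exact mul_le_of_le_one_left (hfp0 i) (le_hasSum (herow j) i (fun k _ => he0 j k))
  set S : I → ℝ := fun i => ∑' j, dm i j * (g j : ℝ) ^ n with hSdef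
  have hS0 : ∀ i, 0 ≤ S i := fun i => tsum_nonneg (fun j => mul_nonneg (hd0 i j) (hgp0 j))
  have hfleS : ∀ i, (f i : ℝ) ^ n ≤ S i := fun i =>
    jensen_le (hd0 i) (hdrow i) (hgd i) hneven hn0 (hSrow i)
  set T : I → ℝ := fun j => ∑' i, em j i * (f i : ℝ) ^ n with hTdef
  have hgleT : ∀ j, (g j : ℝ) ^ n ≤ T j := fun j =>
    jensen_le (he0 j) (herow j) (hfe j) hneven hn0 (hTrow j)
  -- ENNReal chain
  set Fe : I → ℝ≥0∞ := fun i => ENNReal.ofReal ((f i : ℝ) ^ n) with hFe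
  set Ge : I → ℝ≥0∞ := fun j => ENNReal.ofReal ((g j : ℝ) ^ n) with hGe
  have E2 : ∑' i, ENNReal.ofReal (S i) = ∑' j, Ge j := by
    have h1 : ∀ i, ENNReal.ofReal (S i) = ∑' j, ENNReal.ofReal (dm i j * (g j : ℝ) ^ n) :=
      fun i => ENNReal.ofReal_tsum_of_nonneg (fun j => mul_nonneg (hd0 i j) (hgp0 j)) (hSrow i)
    simp_rw [h1]
    exact tonelli_col hd0 hdcol _
  have E4 : ∑' j, ENNReal.ofReal (T j) = ∑' i, Fe i := by
    have h1 : ∀ j, ENNReal.ofReal (T j) = ∑' i, ENNReal.ofReal (em j i * (f i : ℝ) ^ n) :=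
      fun j => ENNReal.ofReal_tsum_of_nonneg (fun i => mul_nonneg (he0 j i) (hfp0 i)) (hTrow j)
    simp_rw [h1]
    exact tonelli_col he0 hecol _
  have E1 : ∑' i, Fe i ≤ ∑' i, ENNReal.ofReal (S i) :=
    ENNReal.tsum_le_tsum (fun i => ENNReal.ofReal_le_ofReal (hfleS i))
  have E3 : ∑' j, Ge j ≤ ∑' j, ENNReal.ofReal (T j) :=
    ENNReal.tsum_le_tsum (fun j => ENNReal.ofReal_le_ofReal (hgleT j))
  have hchain : ∑' i, Fe i = ∑' i, ENNReal.ofReal (S i) := by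
    have h1 : ∑' i, Fe i ≤ ∑' i, Fe i := le_of_le_of_eq (E1.trans (E2.le.trans (E3.trans E4.le))) rfl
    exact le_antisymm E1 (by rw [E2]; exact E3.trans E4.le)
  have hGfin : ∑' j, Ge j ≠ ⊤ := by
    rw [hGe]
    rw [← ENNReal.ofReal_tsum_of_nonneg hgp0 hgpow]
    exact ENNReal.ofReal_ne_top
  have hSfin : ∑' i, ENNReal.ofReal (S i) ≠ ⊤ := by rw [E2]; exact hGfin
  -- back to real sums
  have hSsum : Summable S := by
    have := ENNReal.summable_toReal hSfin
    simpa only [ENNReal.toReal_ofReal (hS0 _)] using this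
  have hsum_eq : ∑' i, S i = ∑' i, (f i : ℝ) ^ n := by
    have h := congrArg ENNReal.toReal hchain
    rw [ENNReal.tsum_toReal_eq (fun i => ENNReal.ofReal_ne_top),
      ENNReal.tsum_toReal_eq (fun i => ENNReal.ofReal_ne_top)] at h
    simp only [hFe, ENNReal.toReal_ofReal (hS0 _), ENNReal.toReal_ofReal (hfp0 _)] at h
    exact h.symm
  have hSeq : ∀ i, S i = (f i : ℝ) ^ n := by
    intro i
    have hdiff : Summable (fun i => S i - (f i : ℝ) ^ n) := hSsum.sub hfpow
    have hdt : ∑' i, (S i - (f i : ℝ) ^ n) = 0 := by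
      rw [hSsum.tsum_sub hfpow, hsum_eq, sub_self]
    have h1 : S i - (f i : ℝ) ^ n ≤ 0 :=
      hdt ▸ hdiff.le_tsum i (fun k _ => sub_nonneg.2 (hfleS k))
    linarith [hfleS i]
  intro i j hdij
  exact jensen_eq (hd0 i) (hdrow i) (hgd i) hneven hn0 (hSrow i) (hSeq i) j hdij

end Main

section Perm2
variable {I : Type*} {p : ℝ≥0∞} [Fact (1 ≤ p)]

/-- An indicator family has sum 1. -/
lemma hasSum_stdb_row (c : I) : HasSum (fun j : I => (stdb p j c : ℝ)) 1 := by
  classical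
  have h : (fun j : I => (stdb p j c : ℝ)) = fun j => if j = c then (1:ℝ) else 0 := by
    funext j
    rcases eq_or_ne j c with h | h
    · subst h; rw [stdb_apply_self]; simp
    · rw [stdb_apply_ne j (Ne.symm h)]; simp [h]
  rw [h]
  exact hasSum_ite_eq c 1

lemma permCLM_isDS (hp : p ≠ ∞) (τ : I ≃ I) : IsDoublyStochastic (permCLM hp τ) := by
  classical
  have hpos : IsPositiveOp (permCLM hp τ) := by
    intro F hF i
    exact hF (τ i)
  refine ⟨⟨hpos, ?_⟩, ⟨hpos, ?_⟩⟩
  · intro i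
    have h : (fun j : I => (permCLM hp τ (stdb p j) i : ℝ)) = fun j => (stdb p j (τ i) : ℝ) := rfl
    rw [h]
    exact hasSum_stdb_row (τ i)
  · intro j
    have h : (fun i : I => (permCLM hp τ (stdb p j) i : ℝ))
        = fun i => if i = τ.symm j then (1:ℝ) else 0 := by
      funext i
      show (stdb p j (τ i) : ℝ) = _
      rcases eq_or_ne i (τ.symm j) with h | h
      · subst h; rw [Equiv.apply_symm_apply, stdb_apply_self]; simp
      · rw [stdb_apply_ne j (by
          intro hc
          exact h (by rw [← hc]; simp))]
        simp [h]
    rw [h]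
    exact hasSum_ite_eq (τ.symm j) 1

/-- A continuous linear map is determined by its action on the basis. -/
lemma clm_eq_on_basis (hp : p ≠ ∞)
    {P Q : lp (fun _ : I => ℝ) p →L[ℝ] lp (fun _ : I => ℝ) p}
    (h : ∀ j, P (stdb p j) = Q (stdb p j)) (F : lp (fun _ : I => ℝ) p) : P F = Q F := by
  letI := Classical.decEq I
  have hsingle : ∀ j : I, lp.single p j (F j) = F j • stdb p j := by
    intro j
    show _ = F j • (lp.single p j (1:ℝ) : lp (fun _ : I => ℝ) p)
    rw [← lp.single_smul]
    norm_num
  have h1 := (lp.hasSum_single hp F).mapL P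
  have h2 := (lp.hasSum_single hp F).mapL Q
  have h3 : (fun j => P (lp.single p j (F j))) = fun j => Q (lp.single p j (F j)) := by
    funext j
    rw [hsingle j, map_smul, map_smul, h j]
  rw [h3] at h1
  exact h1.unique h2
end Perm2

/-- `f ≺ g` and `g ≺ f` if and only if `f = P g` for some permutation operator `P`. -/
theorem stmt12 {I : Type*} [Nonempty I] (p : ℝ≥0∞) [Fact (1 ≤ p)] (hp : p ≠ ∞)
    (f g : lp (fun _ : I => ℝ) p) :
    (Majorized f g ∧ Majorized g f) ↔
      ∃ (θ : I ≃ I) (P : lp (fun _ : I => ℝ) p →L[ℝ] lp (fun _ : I => ℝ) p),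
        (∀ j : I, P (stdb p j) = stdb p (θ j)) ∧ f = P g := by
  constructor
  · rintro ⟨⟨D, hD, hfg⟩, ⟨E, hE, hgf⟩⟩
    have hrig1 : ∀ i j, D (stdb p j) i ≠ 0 → g j = f i := rigidity hp hD hE hfg hgf
    have hrig2 : ∀ i j, E (stdb p j) i ≠ 0 → f j = g i := rigidity hp hE hD hgf hfg
    have he : ∀ t : ℝ, Nonempty ({i // (f : ∀ _ : I, ℝ) i = t} ≃ {j // (g : ∀ _ : I, ℝ) j = t}) := by
      intro t
      refine fiber_equiv_nonempty (w := fun i j => D (stdb p j) i) (v := fun j i => E (stdb p i) j)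
        (fun i j => hD.1.1 (stdb p j) (fun j' => stdb_nonneg j j') i)
        (fun j i => hE.1.1 (stdb p i) (fun j' => stdb_nonneg i j') j)
        hD.1.2 hD.2.2 hE.1.2 hE.2.2 hrig1 (fun j i => hrig2 j i) t
    let σ : I ≃ I := Equiv.ofFiberEquiv (fun t => Classical.choice (he t))
    have hσ : ∀ i : I, g (σ i) = f i := fun i => Equiv.ofFiberEquiv_map _ i
    refine ⟨σ.symm, permCLM hp σ, ?_, ?_⟩
    · intro j
      rw [permCLM_stdb]
    · apply lp.ext
      funext i
      exact (hσ i).symm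
  · rintro ⟨θ, P, hPb, hf⟩
    have hQb : ∀ j, permCLM hp θ.symm (stdb p j) = stdb p (θ j) := by
      intro j
      rw [permCLM_stdb, Equiv.symm_symm]
    have hPQ : ∀ F, P F = permCLM hp θ.symm F :=
      clm_eq_on_basis hp (fun j => (hPb j).trans (hQb j).symm)
    have hfQ : f = permCLM hp θ.symm g := by rw [hf, hPQ g]
    constructor
    · exact ⟨permCLM hp θ.symm, permCLM_isDS hp θ.symm, hfQ⟩
    · refine ⟨permCLM hp θ, permCLM_isDS hp θ, ?_⟩
      apply lp.ext
      funext j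
      show g j = f (θ j)
      have : f (θ j) = g (θ.symm (θ j)) := by
        rw [hfQ]; rfl
      rw [this, Equiv.symm_apply_apply]
end

section
/- Let I be infinite, 1 ≤ p < ∞, I₀ ⊆ I countable, Σ = {σ_i : I → I ; i ∈ I₀} a family of injections with pairwise disjoint ranges, and (α_i)_{i∈I₀} ∈ ℓᵖ(I₀). Then T := ∑_{i∈I₀} α_i P_{σ_i} is a well-defined bounded linear operator on ℓᵖ(I) that preserves majorization. -/
open scoped ENNReal

open Classical in
lemma stdb_apply (p : ℝ≥0∞) {I : Type*} (j k : I) :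
    (stdb p j : ∀ _ : I, ℝ) k = if k = j then 1 else 0 := by
  letI := Classical.decEq I
  rcases eq_or_ne k j with rfl | h
  · simp [stdb, lp.single_apply_self]
  · simp [stdb, lp.single_apply_ne _ _ _ h, h]

noncomputable def evCLM (p : ℝ≥0∞) [Fact (1 ≤ p)] {I : Type*} (k : I) :
    lp (fun _ : I => ℝ) p →L[ℝ] ℝ :=
  LinearMap.mkContinuous
    { toFun := fun f => f k
      map_add' := fun f g => by simp [lp.coeFn_add]
      map_smul' := fun c f => by simp [lp.coeFn_smul] }
    1 (fun f => by
      have hp0 : p ≠ 0 := (zero_lt_one.trans_le (Fact.out : (1:ℝ≥0∞) ≤ p)).ne'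
      exact (by simpa using lp.norm_apply_le_norm hp0 f k : ‖f k‖ ≤ 1 * ‖f‖))

@[simp] lemma evCLM_apply (p : ℝ≥0∞) [Fact (1 ≤ p)] {I : Type*} (k : I)
    (f : lp (fun _ : I => ℝ) p) : evCLM p k f = f k := rfl

lemma coord_hasSum {I : Type*} {p : ℝ≥0∞} [Fact (1 ≤ p)] (hp : p ≠ ∞)
    (A : lp (fun _ : I => ℝ) p →L[ℝ] lp (fun _ : I => ℝ) p) (f : lp (fun _ : I => ℝ) p)
    (k : I) :
    HasSum (fun j : I => f j * (A (stdb p j) : ∀ _ : I, ℝ) k) ((A f : ∀ _ : I, ℝ) k) := by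
  letI := Classical.decEq I
  have h1 : HasSum (fun j : I => A (lp.single p j (f j))) (A f) :=
    (lp.hasSum_single hp f).mapL A
  have h2 : ∀ j : I, A (lp.single p j (f j)) = f j • A (stdb p j) := by
    intro j
    have : lp.single p j (f j) = f j • stdb p j := by
      simp only [stdb, ← lp.single_smul, smul_eq_mul, mul_one]
    rw [this, map_smul]
  simp only [h2] at h1
  have := h1.mapL (evCLM p k)
  simpa [lp.coeFn_smul, smul_eq_mul] using this

lemma injOp_apply {I : Type*} {p : ℝ≥0∞} [Fact (1 ≤ p)] (hp : p ≠ ∞)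
    {τ : I → I} (hτ : Function.Injective τ)
    {A : lp (fun _ : I => ℝ) p →L[ℝ] lp (fun _ : I => ℝ) p}
    (hA : ∀ j, A (stdb p j) = stdb p (τ j)) (f : lp (fun _ : I => ℝ) p) (n : I) :
    (A f : ∀ _ : I, ℝ) (τ n) = f n := by
  classical
  have h := coord_hasSum hp A f (τ n)
  have h2 : (fun j : I => f j * (A (stdb p j) : ∀ _ : I, ℝ) (τ n))
      = fun j => if j = n then f n else 0 := by
    funext j
    rw [hA j, stdb_apply]
    rcases eq_or_ne j n with rfl | hj
    · simp
    · rw [if_neg fun hc => hj (hτ hc).symm, mul_zero, if_neg hj]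
  rw [h2] at h
  exact h.unique (hasSum_ite_eq n (f n))

lemma injOp_apply_zero {I : Type*} {p : ℝ≥0∞} [Fact (1 ≤ p)] (hp : p ≠ ∞)
    {τ : I → I}
    {A : lp (fun _ : I => ℝ) p →L[ℝ] lp (fun _ : I => ℝ) p}
    (hA : ∀ j, A (stdb p j) = stdb p (τ j)) (f : lp (fun _ : I => ℝ) p)
    {k : I} (hk : k ∉ Set.range τ) :
    (A f : ∀ _ : I, ℝ) k = 0 := by
  have h := coord_hasSum hp A f k
  have h2 : (fun j : I => f j * (A (stdb p j) : ∀ _ : I, ℝ) k) = fun _ => (0:ℝ) := by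
    funext j
    rw [hA j, stdb_apply, if_neg fun hc => hk ⟨j, hc.symm⟩, mul_zero]
  rw [h2] at h
  exact h.unique hasSum_zero

lemma norm_rpow_of_inj {I : Type*} {p : ℝ≥0∞} [Fact (1 ≤ p)] (hq : 0 < p.toReal)
    {τ : I → I} (hτ : Function.Injective τ) (g f : lp (fun _ : I => ℝ) p)
    (ha : ∀ n, (g : ∀ _ : I, ℝ) (τ n) = f n)
    (hb : ∀ k, k ∉ Set.range τ → (g : ∀ _ : I, ℝ) k = 0) :
    ‖g‖ ^ p.toReal = ‖f‖ ^ p.toReal := by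
  have h1 := lp.hasSum_norm hq g
  have h2 : HasSum ((fun k => ‖(g : ∀ _ : I, ℝ) k‖ ^ p.toReal) ∘ τ) (‖g‖ ^ p.toReal) :=
    (hτ.hasSum_iff (fun k hk => by simp [hb k hk, Real.zero_rpow hq.ne'])).mpr h1
  have h3 : ((fun k => ‖(g : ∀ _ : I, ℝ) k‖ ^ p.toReal) ∘ τ)
      = fun n => ‖f n‖ ^ p.toReal := by
    funext n; simp [Function.comp, ha n]
  rw [h3] at h2
  exact h2.unique (lp.hasSum_norm hq f)

lemma norm_rpow_add_disjoint {I : Type*} {p : ℝ≥0∞} [Fact (1 ≤ p)] (hq : 0 < p.toReal)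
    (f g : lp (fun _ : I => ℝ) p)
    (h : ∀ k, (f : ∀ _ : I, ℝ) k = 0 ∨ (g : ∀ _ : I, ℝ) k = 0) :
    ‖f + g‖ ^ p.toReal = ‖f‖ ^ p.toReal + ‖g‖ ^ p.toReal := by
  refine (lp.hasSum_norm hq (f + g)).unique ?_
  have e : ∀ k, ‖((f + g : lp (fun _ : I => ℝ) p) : ∀ _ : I, ℝ) k‖ ^ p.toReal
      = ‖(f : ∀ _ : I, ℝ) k‖ ^ p.toReal + ‖(g : ∀ _ : I, ℝ) k‖ ^ p.toReal := by
    intro k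
    have hk : ((f + g : lp (fun _ : I => ℝ) p) : ∀ _ : I, ℝ) k = f k + g k := by
      rw [lp.coeFn_add]; rfl
    rcases h k with h0 | h0 <;> simp [hk, h0, Real.zero_rpow hq.ne']
  simp only [e]
  exact (lp.hasSum_norm hq f).add (lp.hasSum_norm hq g)

set_option maxHeartbeats 2000000 in
/-- For `I` infinite, a countable `I₀ ⊆ I`, injections `σ i : I → I` (`i ∈ I₀`) with pairwise
disjoint ranges, and `(α i) ∈ ℓᵖ(I₀)`, the operator `T = ∑_{i∈I₀} α i • P_{σ i}` is a
well-defined bounded operator preserving majorization. -/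
theorem stmt16 {I : Type*} [Infinite I] (p : ℝ≥0∞) [Fact (1 ≤ p)] (hp : p ≠ ∞)
    (I₀ : Set I) (hI₀ : I₀.Countable)
    (σ : I₀ → I → I) (hinj : ∀ i, Function.Injective (σ i))
    (hdisj : ∀ i₁ i₂ : I₀, i₁ ≠ i₂ → Disjoint (Set.range (σ i₁)) (Set.range (σ i₂)))
    (α : I₀ → ℝ) (hα : Memℓp α p)
    (P : I₀ → lp (fun _ : I => ℝ) p →L[ℝ] lp (fun _ : I => ℝ) p)
    (hP : ∀ (i : I₀) (j : I), P i (stdb p j) = stdb p (σ i j)) :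
    ∃ T : lp (fun _ : I => ℝ) p →L[ℝ] lp (fun _ : I => ℝ) p,
      HasSum (fun i : I₀ => α i • P i) T ∧ PreservesMajorization T := by
  classical
  have hq : 0 < p.toReal :=
    ENNReal.toReal_pos (zero_lt_one.trans_le (Fact.out : (1:ℝ≥0∞) ≤ p)).ne' hp
  set q := p.toReal with hqdef
  have hPa : ∀ (i : I₀) (h : lp (fun _ : I => ℝ) p) (n : I),
      (P i h : ∀ _ : I, ℝ) (σ i n) = h n := fun i h n => injOp_apply hp (hinj i) (hP i) h n
  have hPb : ∀ (i : I₀) (h : lp (fun _ : I => ℝ) p) (k : I), k ∉ Set.range (σ i) →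
      (P i h : ∀ _ : I, ℝ) k = 0 := fun i h k hk => injOp_apply_zero hp (hP i) h hk
  have hsupp : ∀ (S : Finset I₀) (h : lp (fun _ : I => ℝ) p) (k : I),
      (∀ i ∈ S, k ∉ Set.range (σ i)) →
      ((∑ i ∈ S, α i • P i) h : ∀ _ : I, ℝ) k = 0 := by
    intro S h k hk
    rw [ContinuousLinearMap.sum_apply, lp.coeFn_sum, Finset.sum_apply]
    refine Finset.sum_eq_zero fun i hi => ?_
    rw [ContinuousLinearMap.smul_apply, lp.coeFn_smul, Pi.smul_apply,
      hPb i h k (hk i hi), smul_zero]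
  have hSnorm : ∀ (S : Finset I₀) (h : lp (fun _ : I => ℝ) p),
      ‖(∑ i ∈ S, α i • P i) h‖ ^ q = (∑ i ∈ S, |α i| ^ q) * ‖h‖ ^ q := by
    intro S h
    induction S using Finset.induction_on with
    | empty => simp [Real.zero_rpow hq.ne']
    | @insert i S hi ih =>
      rw [Finset.sum_insert hi, Finset.sum_insert hi, ContinuousLinearMap.add_apply]
      rw [norm_rpow_add_disjoint hq _ _ ?_, ih]
      · have h1 : ‖(α i • P i) h‖ ^ q = |α i| ^ q * ‖h‖ ^ q := by
          rw [ContinuousLinearMap.smul_apply, norm_smul, Real.norm_eq_abs,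
            Real.mul_rpow (abs_nonneg _) (norm_nonneg _),
            norm_rpow_of_inj hq (hinj i) (P i h) h (hPa i h) (hPb i h)]
        rw [h1]; ring
      · intro k
        by_cases hk : k ∈ Set.range (σ i)
        · right
          exact hsupp S h k fun i' hi' =>
            Set.disjoint_right.mp (hdisj i' i (fun he => hi (he ▸ hi'))) hk
        · left
          rw [ContinuousLinearMap.smul_apply, lp.coeFn_smul, Pi.smul_apply,
            hPb i h k hk, smul_zero]
  have hSbound : ∀ S : Finset I₀, ‖∑ i ∈ S, α i • P i‖ ≤ (∑ i ∈ S, |α i| ^ q) ^ q⁻¹ := by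
    intro S
    have hs0 : 0 ≤ ∑ i ∈ S, |α i| ^ q :=
      Finset.sum_nonneg fun i _ => Real.rpow_nonneg (abs_nonneg _) _
    refine ContinuousLinearMap.opNorm_le_bound _ (Real.rpow_nonneg hs0 _) fun h => ?_
    rw [← Real.rpow_le_rpow_iff (norm_nonneg _)
        (mul_nonneg (Real.rpow_nonneg hs0 _) (norm_nonneg _)) hq, hSnorm S h,
      Real.mul_rpow (Real.rpow_nonneg hs0 _) (norm_nonneg _), Real.rpow_inv_rpow hs0 hq.ne']
  have hαq : Summable (fun i : I₀ => |α i| ^ q) := by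
    simpa [Real.norm_eq_abs] using hα.summable hq
  have hsummable : Summable (fun i : I₀ => α i • P i) := by
    rw [summable_iff_vanishing]
    intro e he
    obtain ⟨ε, hε, hball⟩ := Metric.mem_nhds_iff.mp he
    obtain ⟨s, hs⟩ := summable_iff_vanishing.mp hαq (Metric.ball 0 (ε ^ q))
      (Metric.ball_mem_nhds 0 (Real.rpow_pos_of_pos hε q))
    refine ⟨s, fun t ht => hball ?_⟩
    rw [mem_ball_zero_iff]
    have h1 := hs t ht
    rw [mem_ball_zero_iff] at h1
    have h2 : ∑ i ∈ t, |α i| ^ q < ε ^ q := lt_of_abs_lt (by simpa using h1)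
    have hs0 : 0 ≤ ∑ i ∈ t, |α i| ^ q :=
      Finset.sum_nonneg fun i _ => Real.rpow_nonneg (abs_nonneg _) _
    calc ‖∑ i ∈ t, α i • P i‖ ≤ (∑ i ∈ t, |α i| ^ q) ^ q⁻¹ := hSbound t
      _ < (ε ^ q) ^ q⁻¹ := Real.rpow_lt_rpow hs0 h2 (inv_pos.mpr hq)
      _ = ε := by rw [← Real.rpow_mul hε.le, mul_inv_cancel₀ hq.ne', Real.rpow_one]
  obtain ⟨T, hT⟩ := hsummable
  have hTcoord : ∀ (h : lp (fun _ : I => ℝ) p) (k : I),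
      HasSum (fun i : I₀ => α i * (P i h : ∀ _ : I, ℝ) k) ((T h : ∀ _ : I, ℝ) k) := by
    intro h k
    have := hT.mapL ((evCLM p k).comp (ContinuousLinearMap.apply ℝ (lp (fun _ : I => ℝ) p) h))
    simpa [ContinuousLinearMap.smul_apply, lp.coeFn_smul, smul_eq_mul] using this
  have hT1 : ∀ (h : lp (fun _ : I => ℝ) p) (i : I₀) (n : I),
      (T h : ∀ _ : I, ℝ) (σ i n) = α i * h n := by
    intro h i n
    have h2 : (fun i' : I₀ => α i' * (P i' h : ∀ _ : I, ℝ) (σ i n))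
        = fun i' => if i' = i then α i * h n else 0 := by
      funext i'
      rcases eq_or_ne i' i with rfl | hne
      · rw [hPa, if_pos rfl]
      · rw [hPb i' h _ (Set.disjoint_right.mp (hdisj i' i hne) ⟨n, rfl⟩), mul_zero, if_neg hne]
    exact (h2 ▸ hTcoord h (σ i n)).unique (hasSum_ite_eq i _)
  have hT0 : ∀ (h : lp (fun _ : I => ℝ) p) (k : I), (∀ i : I₀, k ∉ Set.range (σ i)) →
      (T h : ∀ _ : I, ℝ) k = 0 := by
    intro h k hk
    have h2 : (fun i : I₀ => α i * (P i h : ∀ _ : I, ℝ) k) = fun _ => (0:ℝ) :=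
      funext fun i => by rw [hPb i h k (hk i), mul_zero]
    exact (h2 ▸ hTcoord h k).unique hasSum_zero
  refine ⟨T, hT, ?_⟩
  rintro f g ⟨D, hD, hfg⟩
  -- the adjoint-like composition operators Ps i : u ↦ u ∘ σ i
  have husum : ∀ u : lp (fun _ : I => ℝ) p, Summable fun k => ‖(u : ∀ _ : I, ℝ) k‖ ^ q :=
    fun u => (lp.memℓp u).summable hq
  have hPsEx : ∀ i : I₀, ∃ A : lp (fun _ : I => ℝ) p →L[ℝ] lp (fun _ : I => ℝ) p,
      ∀ (u : lp (fun _ : I => ℝ) p) (n : I), (A u : ∀ _ : I, ℝ) n = u (σ i n) := by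
    intro i
    have hmem : ∀ u : lp (fun _ : I => ℝ) p, Memℓp (fun n => u (σ i n)) p := fun u =>
      memℓp_gen (by have := (husum u).comp_injective (hinj i); exact this)
    have hbnd : ∀ u : lp (fun _ : I => ℝ) p,
        ‖(⟨fun n => u (σ i n), hmem u⟩ : lp (fun _ : I => ℝ) p)‖ ≤ 1 * ‖u‖ := by
      intro u
      rw [one_mul, ← Real.rpow_le_rpow_iff (norm_nonneg _) (norm_nonneg _) hq,
        lp.norm_rpow_eq_tsum hq, lp.norm_rpow_eq_tsum hq]
      set w : I → ℝ := fun k => if k ∈ Set.range (σ i) then ‖(u : ∀ _ : I, ℝ) k‖ ^ q else 0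
        with hw
      have hwcomp : ∀ n, w (σ i n) = ‖(u : ∀ _ : I, ℝ) (σ i n)‖ ^ q := fun n => if_pos ⟨n, rfl⟩
      have hwle : ∀ k, w k ≤ ‖(u : ∀ _ : I, ℝ) k‖ ^ q := fun k => by
        simp only [hw]; split_ifs
        · exact le_rfl
        · exact Real.rpow_nonneg (norm_nonneg _) _
      have hwnn : ∀ k, 0 ≤ w k := fun k => by
        simp only [hw]; split_ifs
        · exact Real.rpow_nonneg (norm_nonneg _) _
        · exact le_rfl
      have hwsum : Summable w := Summable.of_nonneg_of_le hwnn hwle (husum u)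
      have h1 : ∑' n, ‖((⟨fun n => u (σ i n), hmem u⟩ : lp (fun _ : I => ℝ) p) :
          ∀ _ : I, ℝ) n‖ ^ q = ∑' n, w (σ i n) := by
        refine tsum_congr fun n => ?_
        rw [hwcomp]
      rw [h1, (hinj i).tsum_eq (f := w) (fun k hk => by
        by_contra hc
        exact (Function.mem_support.mp hk) (if_neg hc))]
      exact hwsum.tsum_le_tsum hwle (husum u)
    exact ⟨LinearMap.mkContinuous
      { toFun := fun u => ⟨fun n => u (σ i n), hmem u⟩
        map_add' := fun u v => by
          apply lp.ext
          funext n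
          have h1 : ((u + v : lp (fun _ : I => ℝ) p) : ∀ _ : I, ℝ) (σ i n)
              = u (σ i n) + v (σ i n) := by rw [lp.coeFn_add]; rfl
          exact h1.trans (by rw [lp.coeFn_add]; rfl)
        map_smul' := fun c u => by
          apply lp.ext
          funext n
          have h1 : ((c • u : lp (fun _ : I => ℝ) p) : ∀ _ : I, ℝ) (σ i n)
              = c • (u (σ i n)) := by rw [lp.coeFn_smul]; rfl
          exact h1.trans (by rw [lp.coeFn_smul]; rfl) }
      1 hbnd, fun u n => rfl⟩
  choose Ps hPsApp using hPsEx
  -- the index bijection onto the union of the ranges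
  set F : I₀ × I → I := fun x => σ x.1 x.2 with hFdef
  have hF : Function.Injective F := by
    rintro ⟨i₁, n₁⟩ ⟨i₂, n₂⟩ h
    simp only [hFdef] at h
    rcases eq_or_ne i₁ i₂ with rfl | hne
    · obtain rfl := hinj i₁ h
      rfl
    · exact absurd (⟨n₂, h.symm⟩ : σ i₁ n₁ ∈ Set.range (σ i₂))
        (Set.disjoint_left.mp (hdisj i₁ i₂ hne) ⟨n₁, rfl⟩)
  -- basic norm estimates for Ps
  have hPsNormEq : ∀ (i : I₀) (u : lp (fun _ : I => ℝ) p),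
      ‖Ps i u‖ ^ q = ∑' k, (if k ∈ Set.range (σ i) then ‖(u : ∀ _ : I, ℝ) k‖ ^ q else 0) := by
    intro i u
    rw [lp.norm_rpow_eq_tsum hq]
    have h1 : ∑' n, ‖(Ps i u : ∀ _ : I, ℝ) n‖ ^ q
        = ∑' n, (if (σ i n) ∈ Set.range (σ i) then ‖(u : ∀ _ : I, ℝ) (σ i n)‖ ^ q else 0) :=
      tsum_congr fun n => by rw [hPsApp, if_pos ⟨n, rfl⟩]
    rw [h1]
    exact (hinj i).tsum_eq
      (f := fun k => if k ∈ Set.range (σ i) then ‖(u : ∀ _ : I, ℝ) k‖ ^ q else 0)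
      (fun k hk => by
        by_contra hc
        exact (Function.mem_support.mp hk) (if_neg hc))
  have hPsSumLe : ∀ (u : lp (fun _ : I => ℝ) p) (S : Finset I₀),
      ∑ i ∈ S, ‖Ps i u‖ ^ q ≤ ‖u‖ ^ q := by
    intro u S
    have hwnn : ∀ (i : I₀) (k : I),
        0 ≤ (if k ∈ Set.range (σ i) then ‖(u : ∀ _ : I, ℝ) k‖ ^ q else 0) := fun i k => by
      split_ifs
      · exact Real.rpow_nonneg (norm_nonneg _) _
      · exact le_rfl
    have hwle : ∀ (i : I₀) (k : I),
        (if k ∈ Set.range (σ i) then ‖(u : ∀ _ : I, ℝ) k‖ ^ q else 0)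
          ≤ ‖(u : ∀ _ : I, ℝ) k‖ ^ q := fun i k => by
      split_ifs
      · exact le_rfl
      · exact Real.rpow_nonneg (norm_nonneg _) _
    have hwsum : ∀ i : I₀,
        Summable (fun k => if k ∈ Set.range (σ i) then ‖(u : ∀ _ : I, ℝ) k‖ ^ q else 0) :=
      fun i => Summable.of_nonneg_of_le (hwnn i) (hwle i) (husum u)
    have hptle : ∀ k : I,
        (∑ i ∈ S, if k ∈ Set.range (σ i) then ‖(u : ∀ _ : I, ℝ) k‖ ^ q else 0)
          ≤ ‖(u : ∀ _ : I, ℝ) k‖ ^ q := by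
      intro k
      by_cases hex : ∃ i ∈ S, k ∈ Set.range (σ i)
      · obtain ⟨i₀, hi₀S, hi₀⟩ := hex
        rw [Finset.sum_eq_single_of_mem i₀ hi₀S (fun i' hi' hne =>
          if_neg (Set.disjoint_right.mp (hdisj i' i₀ hne) hi₀)), if_pos hi₀]
      · rw [Finset.sum_eq_zero (fun i hi => if_neg (fun hr => hex ⟨i, hi, hr⟩))]
        exact Real.rpow_nonneg (norm_nonneg _) _
    calc ∑ i ∈ S, ‖Ps i u‖ ^ q
        = ∑ i ∈ S, ∑' k, (if k ∈ Set.range (σ i) then ‖(u : ∀ _ : I, ℝ) k‖ ^ q else 0) :=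
          Finset.sum_congr rfl fun i _ => hPsNormEq i u
      _ = ∑' k, ∑ i ∈ S, (if k ∈ Set.range (σ i) then ‖(u : ∀ _ : I, ℝ) k‖ ^ q else 0) :=
          (Summable.tsum_finsetSum (fun i _ => hwsum i)).symm
      _ ≤ ∑' k, ‖(u : ∀ _ : I, ℝ) k‖ ^ q :=
          (summable_sum (fun i _ => hwsum i)).tsum_le_tsum hptle (husum u)
      _ = ‖u‖ ^ q := (lp.norm_rpow_eq_tsum hq u).symm
  have hPsq : ∀ u, Summable (fun i : I₀ => ‖Ps i u‖ ^ q) := fun u =>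
    summable_of_sum_le (fun i => Real.rpow_nonneg (norm_nonneg _) _) (hPsSumLe u)
  have hPsTsumLe : ∀ u, ∑' i : I₀, ‖Ps i u‖ ^ q ≤ ‖u‖ ^ q := fun u =>
    (hPsq u).tsum_le_of_sum_le (hPsSumLe u)
  have hDle : ∀ (i : I₀) u, ‖D (Ps i u)‖ ^ q ≤ ‖D‖ ^ q * ‖Ps i u‖ ^ q := by
    intro i u
    calc ‖D (Ps i u)‖ ^ q ≤ (‖D‖ * ‖Ps i u‖) ^ q :=
          Real.rpow_le_rpow (norm_nonneg _) (D.le_opNorm _) hq.le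
      _ = ‖D‖ ^ q * ‖Ps i u‖ ^ q := Real.mul_rpow (norm_nonneg _) (norm_nonneg _)
  have hDPs : ∀ u, Summable (fun i : I₀ => ‖D (Ps i u)‖ ^ q) := fun u =>
    Summable.of_nonneg_of_le (fun i => Real.rpow_nonneg (norm_nonneg _) _)
      (fun i => hDle i u) ((hPsq u).mul_left (‖D‖ ^ q))
  have hProdFun : ∀ u, Summable (fun x : I₀ × I => ‖(D (Ps x.1 u) : ∀ _ : I, ℝ) x.2‖ ^ q) := by
    intro u
    refine (summable_prod_of_nonneg (fun x => Real.rpow_nonneg (norm_nonneg _) _)).mpr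
      ⟨fun i => (lp.memℓp (D (Ps i u))).summable hq, ?_⟩
    have he : (fun i : I₀ => ∑' n, ‖(D (Ps i u) : ∀ _ : I, ℝ) n‖ ^ q)
        = fun i => ‖D (Ps i u)‖ ^ q := funext fun i => (lp.norm_rpow_eq_tsum hq _).symm
    rw [he]
    exact hDPs u
  set Φ : lp (fun _ : I => ℝ) p → I → ℝ := fun u k =>
    if h : ∃ x : I₀ × I, F x = k then (D (Ps h.choose.1 u) : ∀ _ : I, ℝ) h.choose.2 else u k
    with hΦdef
  have hΦF : ∀ u (i : I₀) (n : I), Φ u (σ i n) = (D (Ps i u) : ∀ _ : I, ℝ) n := by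
    intro u i n
    have hx : ∃ x' : I₀ × I, F x' = σ i n := ⟨(i, n), rfl⟩
    have he : hx.choose = (i, n) := hF hx.choose_spec
    simp only [hΦdef, dif_pos hx, he]
  have hΦ0 : ∀ u (k : I), ¬(∃ x : I₀ × I, F x = k) → Φ u k = u k := by
    intro u k hk
    simp only [hΦdef, dif_neg hk]
  have hΦab : ∀ (u : lp (fun _ : I => ℝ) p),
      Summable (fun k => ‖Φ u k‖ ^ q) ∧ ∑' k, ‖Φ u k‖ ^ q ≤ (‖D‖ ^ q + 1) * ‖u‖ ^ q := by
    intro u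
    obtain ⟨a, ha⟩ : ∃ a : I → ℝ,
        a = fun k => if k ∈ Set.range F then ‖Φ u k‖ ^ q else 0 := ⟨_, rfl⟩
    obtain ⟨b, hb⟩ : ∃ b : I → ℝ,
        b = fun k => if k ∈ Set.range F then 0 else ‖(u : ∀ _ : I, ℝ) k‖ ^ q := ⟨_, rfl⟩
    have hab : ∀ k, ‖Φ u k‖ ^ q = a k + b k := by
      intro k
      by_cases hk : k ∈ Set.range F
      · simp only [ha, hb, if_pos hk, add_zero]
      · simp only [ha, hb, if_neg hk, zero_add, hΦ0 u k hk]
    have haF : (a ∘ F) = fun x : I₀ × I => ‖(D (Ps x.1 u) : ∀ _ : I, ℝ) x.2‖ ^ q := by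
      funext x
      have h1 : a (F x) = ‖Φ u (F x)‖ ^ q := by
        simp only [ha]; exact if_pos (Set.mem_range_self x)
      have h2 : Φ u (F x) = (D (Ps x.1 u) : ∀ _ : I, ℝ) x.2 := hΦF u x.1 x.2
      simp only [Function.comp_apply, h1, h2]
    have hasum : Summable a := by
      refine (hF.summable_iff (fun k hk => ?_)).mp (haF ▸ hProdFun u)
      simp only [ha]; exact if_neg hk
    have hbnn : ∀ k, 0 ≤ b k := fun k => by
      simp only [hb]; split_ifs
      · exact le_rfl
      · exact Real.rpow_nonneg (norm_nonneg _) _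
    have hble : ∀ k, b k ≤ ‖(u : ∀ _ : I, ℝ) k‖ ^ q := fun k => by
      simp only [hb]; split_ifs
      · exact Real.rpow_nonneg (norm_nonneg _) _
      · exact le_rfl
    have hbsum : Summable b := Summable.of_nonneg_of_le hbnn hble (husum u)
    refine ⟨(summable_congr hab).mpr (hasum.add hbsum), ?_⟩
    rw [tsum_congr hab, hasum.tsum_add hbsum]
    have h13 : ∑' k, a k ≤ ‖D‖ ^ q * ‖u‖ ^ q := by
      have h1 : ∑' k, a k = ∑' x : I₀ × I, ‖(D (Ps x.1 u) : ∀ _ : I, ℝ) x.2‖ ^ q := by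
        rw [← hF.tsum_eq (f := a) (fun k hk => by
          by_contra hc
          exact (Function.mem_support.mp hk) (by simp only [ha]; exact if_neg hc))]
        exact tsum_congr fun x => congrFun haF x
      have h2 : ∑' x : I₀ × I, ‖(D (Ps x.1 u) : ∀ _ : I, ℝ) x.2‖ ^ q
          = ∑' i : I₀, ‖D (Ps i u)‖ ^ q := by
        rw [(hProdFun u).tsum_prod' (fun i => (lp.memℓp (D (Ps i u))).summable hq)]
        refine tsum_congr fun i => ?_
        simpa using (lp.norm_rpow_eq_tsum hq (D (Ps i u))).symm
      rw [h1, h2]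
      calc ∑' i : I₀, ‖D (Ps i u)‖ ^ q ≤ ∑' i : I₀, ‖D‖ ^ q * ‖Ps i u‖ ^ q :=
            (hDPs u).tsum_le_tsum (fun i => hDle i u) ((hPsq u).mul_left _)
        _ = ‖D‖ ^ q * ∑' i : I₀, ‖Ps i u‖ ^ q := tsum_mul_left
        _ ≤ ‖D‖ ^ q * ‖u‖ ^ q := mul_le_mul_of_nonneg_left (hPsTsumLe u)
            (Real.rpow_nonneg (norm_nonneg _) _)
    have h4 : ∑' k, b k ≤ ‖u‖ ^ q := by
      rw [lp.norm_rpow_eq_tsum hq]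
      exact hbsum.tsum_le_tsum hble (husum u)
    have := add_le_add h13 h4
    linarith
  have hΦmem : ∀ u, Memℓp (Φ u) p := fun u => memℓp_gen ((hΦab u).1)
  have hΦadd : ∀ u v (k : I), Φ (u + v) k = Φ u k + Φ v k := by
    intro u v k
    by_cases hk : ∃ x : I₀ × I, F x = k
    · obtain ⟨⟨i, n⟩, rfl⟩ := hk
      simp only [hFdef]
      rw [hΦF, hΦF, hΦF, map_add, map_add, lp.coeFn_add, Pi.add_apply]
    · rw [hΦ0 _ _ hk, hΦ0 _ _ hk, hΦ0 _ _ hk, lp.coeFn_add, Pi.add_apply]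
  have hΦsmul : ∀ (c : ℝ) u (k : I), Φ (c • u) k = c * Φ u k := by
    intro c u k
    by_cases hk : ∃ x : I₀ × I, F x = k
    · obtain ⟨⟨i, n⟩, rfl⟩ := hk
      simp only [hFdef]
      rw [hΦF, hΦF, map_smul, map_smul, lp.coeFn_smul, Pi.smul_apply, smul_eq_mul]
    · rw [hΦ0 _ _ hk, hΦ0 _ _ hk, lp.coeFn_smul, Pi.smul_apply, smul_eq_mul]
  have hD'ex : ∃ D' : lp (fun _ : I => ℝ) p →L[ℝ] lp (fun _ : I => ℝ) p,
      ∀ u (k : I), (D' u : ∀ _ : I, ℝ) k = Φ u k := by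
    have hC0 : (0:ℝ) ≤ ‖D‖ ^ q + 1 := by positivity
    refine ⟨LinearMap.mkContinuous
      { toFun := fun u => ⟨Φ u, hΦmem u⟩
        map_add' := fun u v => by
          apply lp.ext
          funext k
          exact (hΦadd u v k).trans (by rw [lp.coeFn_add]; rfl)
        map_smul' := fun c u => by
          apply lp.ext
          funext k
          exact (hΦsmul c u k).trans (by rw [lp.coeFn_smul]; rfl) }
      ((‖D‖ ^ q + 1) ^ q⁻¹) (fun u => ?_), fun u k => rfl⟩
    rw [← Real.rpow_le_rpow_iff (norm_nonneg _)
        (mul_nonneg (Real.rpow_nonneg hC0 _) (norm_nonneg _)) hq,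
      Real.mul_rpow (Real.rpow_nonneg hC0 _) (norm_nonneg _), Real.rpow_inv_rpow hC0 hq.ne',
      lp.norm_rpow_eq_tsum hq]
    exact (hΦab u).2
  obtain ⟨D', hD'app⟩ := hD'ex
  have hPsS1 : ∀ (i : I₀) (m : I), Ps i (stdb p (σ i m)) = stdb p m := by
    intro i m
    apply lp.ext
    funext n
    rw [hPsApp, stdb_apply, stdb_apply]
    rcases eq_or_ne n m with rfl | hnm
    · simp
    · rw [if_neg (fun hc => hnm (hinj i hc)), if_neg hnm]
  have hPsS0 : ∀ (i : I₀) (j : I), j ∉ Set.range (σ i) → Ps i (stdb p j) = 0 := by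
    intro i j hj
    apply lp.ext
    funext n
    rw [hPsApp, stdb_apply, if_neg (fun hc => hj ⟨n, hc⟩)]
    simp [lp.coeFn_zero]
  have posS : IsPositiveOp D' := by
    intro u hu k
    by_cases hk : ∃ x : I₀ × I, F x = k
    · obtain ⟨⟨i, n⟩, rfl⟩ := hk
      simp only [hFdef]
      rw [hD'app, hΦF]
      exact hD.1.1 (Ps i u) (fun n' => by rw [hPsApp]; exact hu _) n
    · rw [hD'app, hΦ0 _ _ hk]
      exact hu k
  have rowS : ∀ k : I, HasSum (fun j : I => (D' (stdb p j) : ∀ _ : I, ℝ) k) 1 := by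
    intro k
    by_cases hk : ∃ x : I₀ × I, F x = k
    · obtain ⟨⟨i, n⟩, rfl⟩ := hk
      refine ((hinj i).hasSum_iff ?_).mp ?_
      · intro j hj
        simp only [hFdef]
        rw [hD'app, hΦF, hPsS0 i j hj, map_zero]
        simp [lp.coeFn_zero]
      · have he : ((fun j => (D' (stdb p j) : ∀ _ : I, ℝ) (F (i, n))) ∘ σ i)
            = fun m => (D (stdb p m) : ∀ _ : I, ℝ) n := by
          funext m
          simp only [Function.comp_apply, hFdef]
          rw [hD'app, hΦF, hPsS1 i m]
        rw [he]
        exact hD.1.2 n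
    · have he : (fun j : I => (D' (stdb p j) : ∀ _ : I, ℝ) k)
          = fun j => if j = k then 1 else 0 := by
        funext j
        rw [hD'app, hΦ0 _ _ hk, stdb_apply]
        rcases eq_or_ne j k with rfl | hjk
        · simp
        · rw [if_neg (Ne.symm hjk), if_neg hjk]
      rw [he]
      exact hasSum_ite_eq k 1
  have colS : ∀ j : I, HasSum (fun k : I => (D' (stdb p j) : ∀ _ : I, ℝ) k) 1 := by
    intro j
    by_cases hj : ∃ x : I₀ × I, F x = j
    · obtain ⟨⟨i, m⟩, rfl⟩ := hj
      refine ((hinj i).hasSum_iff ?_).mp ?_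
      · intro k hk
        by_cases hk2 : ∃ x : I₀ × I, F x = k
        · obtain ⟨⟨i', n⟩, rfl⟩ := hk2
          have hne : i' ≠ i := fun he => hk (by subst he; exact ⟨n, rfl⟩)
          simp only [hFdef]
          rw [hD'app, hΦF, hPsS0 i' _ (Set.disjoint_right.mp (hdisj i' i hne) ⟨m, rfl⟩),
            map_zero]
          simp [lp.coeFn_zero]
        · rw [hD'app, hΦ0 _ _ hk2, stdb_apply,
            if_neg (fun he => hk2 ⟨(i, m), he.symm⟩)]
      · have he : ((fun k => (D' (stdb p (F (i, m))) : ∀ _ : I, ℝ) k) ∘ σ i)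
            = fun n => (D (stdb p m) : ∀ _ : I, ℝ) n := by
          funext n
          simp only [Function.comp_apply, hFdef]
          rw [hD'app, hΦF, hPsS1 i m]
        rw [he]
        exact hD.2.2 m
    · have he : (fun k : I => (D' (stdb p j) : ∀ _ : I, ℝ) k)
          = fun k => if k = j then 1 else 0 := by
        funext k
        by_cases hk : ∃ x : I₀ × I, F x = k
        · obtain ⟨⟨i, n⟩, rfl⟩ := hk
          simp only [hFdef]
          rw [hD'app, hΦF,
            hPsS0 i _ (fun hr => hj ⟨(i, hr.choose), hr.choose_spec⟩), map_zero,
            if_neg (fun he2 => hj ⟨(i, n), he2⟩)]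
          simp [lp.coeFn_zero]
        · rw [hD'app, hΦ0 _ _ hk, stdb_apply]
      rw [he]
      exact hasSum_ite_eq j 1
  have key : T f = D' (T g) := by
    apply lp.ext
    funext k
    by_cases hk : ∃ x : I₀ × I, F x = k
    · obtain ⟨⟨i, n⟩, rfl⟩ := hk
      simp only [hFdef]
      rw [hD'app, hΦF]
      have hPsTg : Ps i (T g) = α i • g := by
        apply lp.ext
        funext m
        rw [hPsApp, lp.coeFn_smul, Pi.smul_apply, smul_eq_mul]
        exact hT1 g i m
      rw [hPsTg, map_smul, lp.coeFn_smul, Pi.smul_apply, smul_eq_mul, ← hfg, hT1 f i n]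
    · have hnr : ∀ i : I₀, k ∉ Set.range (σ i) :=
        fun i hr => hk ⟨(i, hr.choose), hr.choose_spec⟩
      rw [hD'app, hΦ0 _ _ hk, hT0 f k hnr, hT0 g k hnr]
  exact ⟨D', ⟨⟨posS, rowS⟩, ⟨posS, colS⟩⟩, key⟩
end
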